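/- (Safe rule, active features.) Suppose β̄ ∈ ℝᵖ minimizes P over ℝᵖ, ᾱ = Xβ̄ − y, and the link condition holds: for every j, either β̄_j = 0 and |η_j(ᾱ)| ≤ η₀, or β̄_j = sign(η_j(ᾱ))·(|η_j(ᾱ)| − λ₁/(2λ₂)) and |η_j(ᾱ)| ≥ η₀. Then for every α ∈ ℝⁿ and β ∈ ℝᵖ with r = √(2·(P(β) − D(α))), if a coordinate j satisfies |x₍·j₎ᵀα| − ‖x₍·j₎‖·r > 2√(λ₀λ₂) + λ₁, then β̄_j ≠ 0. -/
import Mathlib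


open scoped Classical

lemma fenchel_aux (l0 l1 l2 : ℝ) (hl0 : 0 < l0) (hl1 : 0 < l1) (hl2 : 0 < l2)
    (b t : ℝ) :
    (if 2 * Real.sqrt (l0 * l2) + l1 < |t| then l0 - (|t| - l1) ^ 2 / (4 * l2)
      else 0) ≤ b * t + l1 * |b| + l2 * b ^ 2 + l0 * (if b ≠ 0 then 1 else 0) := by
  have hs : Real.sqrt (l0 * l2) ^ 2 = l0 * l2 := Real.sq_sqrt (by positivity)
  have hs0 : 0 < Real.sqrt (l0 * l2) := Real.sqrt_pos.mpr (by positivity)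
  have hbt : -( |b| * |t|) ≤ b * t := by
    rw [← abs_mul]; exact neg_abs_le _
  split_ifs with h1 h2 h2
  · -- |t| big, b ≠ 0
    have hd : |b| * (|t| - l1) - l2 * b ^ 2 ≤ (|t| - l1) ^ 2 / (4 * l2) := by
      rw [le_div_iff₀ (by positivity)]
      rcases abs_cases b with ⟨hb, _⟩ | ⟨hb, _⟩ <;> rw [hb] <;>
        nlinarith [sq_nonneg (|t| - l1 - 2 * l2 * b), sq_nonneg (|t| - l1 + 2 * l2 * b)]
    nlinarith [abs_nonneg b]
  · -- |t| big, b = 0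
    obtain rfl := not_not.mp h2
    have hd : l0 ≤ (|t| - l1) ^ 2 / (4 * l2) := by
      rw [le_div_iff₀ (by positivity)]
      nlinarith
    simp only [abs_zero, mul_zero, zero_mul, ne_eq, not_true_eq_false, if_false]
    norm_num
    linarith
  · -- |t| small, b ≠ 0
    have hsl : Real.sqrt l0 * Real.sqrt l2 = Real.sqrt (l0 * l2) :=
      (Real.sqrt_mul hl0.le l2).symm
    have hm : 0 ≤ |b| * (2 * Real.sqrt (l0 * l2) + l1 - |t|) :=
      mul_nonneg (abs_nonneg b) (by linarith)
    have e1 : (Real.sqrt l2 * |b| - Real.sqrt l0) ^ 2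
        = (Real.sqrt l2) ^ 2 * |b| ^ 2 - 2 * (Real.sqrt l0 * Real.sqrt l2) * |b|
          + (Real.sqrt l0) ^ 2 := by ring
    rw [Real.sq_sqrt hl2.le, Real.sq_sqrt hl0.le, hsl, sq_abs] at e1
    have key : 0 ≤ l2 * b ^ 2 - 2 * Real.sqrt (l0 * l2) * |b| + l0 :=
      e1 ▸ sq_nonneg _
    linarith [key, hbt, hm]
  · obtain rfl := not_not.mp h2
    simp

/-- STATEMENT 13: (Safe rule, active features.) If β̄ minimizes P,
ᾱ = Xβ̄ − y and the link condition holds, then for all α, β with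
r = √(2(P(β) − D(α))), if |x₍·j₎ᵀα| − ‖x₍·j₎‖·r > 2√(λ₀λ₂) + λ₁ then β̄_j ≠ 0. -/
theorem statement_14 (l0 l1 l2 : ℝ) (hl0 : 0 < l0) (hl1 : 0 < l1) (hl2 : 0 < l2)
    (n p : ℕ) (X : Matrix (Fin n) (Fin p) ℝ) (y : Fin n → ℝ)
    (Φ : ℝ → ℝ)
    (hΦ : ∀ t : ℝ, Φ t =
      if 2 * Real.sqrt (l0 * l2) + l1 < |t| then l0 - (|t| - l1) ^ 2 / (4 * l2)
      else 0)
    (P : (Fin p → ℝ) → ℝ)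
    (hP : ∀ β : Fin p → ℝ, P β =
      (1 / 2) * (∑ i, (y i - ∑ j, X i j * β j) ^ 2)
        + l1 * (∑ j, |β j|) + l2 * (∑ j, (β j) ^ 2)
        + l0 * ((Finset.univ.filter fun j => β j ≠ 0).card : ℝ))
    (D : (Fin n → ℝ) → ℝ)
    (hD : ∀ α : Fin n → ℝ, D α =
      -(1 / 2) * (∑ i, (α i) ^ 2) - (∑ i, y i * α i)
        + ∑ j, Φ (∑ i, X i j * α i))
    (η : (Fin n → ℝ) → Fin p → ℝ)
    (hη : ∀ (α : Fin n → ℝ) (j : Fin p), η α j = -(∑ i, X i j * α i) / (2 * l2))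
    (βbar : Fin p → ℝ) (αbar : Fin n → ℝ)
    (hmin : ∀ β : Fin p → ℝ, P βbar ≤ P β)
    (hαbar : ∀ i, αbar i = (∑ j, X i j * βbar j) - y i)
    (hlink : ∀ j,
      (βbar j = 0 ∧ |η αbar j| ≤ (2 * Real.sqrt (l0 * l2) + l1) / (2 * l2)) ∨
      (βbar j = Real.sign (η αbar j) * (|η αbar j| - l1 / (2 * l2)) ∧
        (2 * Real.sqrt (l0 * l2) + l1) / (2 * l2) ≤ |η αbar j|)) :
    ∀ (α : Fin n → ℝ) (β : Fin p → ℝ) (r : ℝ),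
      r = Real.sqrt (2 * (P β - D α)) →
      ∀ j : Fin p,
        2 * Real.sqrt (l0 * l2) + l1 <
          |∑ i, X i j * α i| - Real.sqrt (∑ i, (X i j) ^ 2) * r →
        βbar j ≠ 0 := by
  have hs0 : 0 < Real.sqrt (l0 * l2) := Real.sqrt_pos.mpr (by positivity)
  -- duality gap bound
  have gap : ∀ a : Fin n → ℝ,
      D a + (1 / 2) * ∑ i, (a i - αbar i) ^ 2 ≤ P βbar := by
    intro a
    have hswap : ∑ i, a i * ∑ j, X i j * βbar j
        = ∑ j, βbar j * ∑ i, X i j * a i := by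
      simp_rw [Finset.mul_sum]
      rw [Finset.sum_comm]
      exact Finset.sum_congr rfl fun j _ =>
        Finset.sum_congr rfl fun i _ => by ring
    have hcard : (((Finset.univ.filter fun j => βbar j ≠ 0).card : ℕ) : ℝ)
        = ∑ j, (if βbar j ≠ 0 then (1 : ℝ) else 0) := by
      rw [Finset.card_filter]
      push_cast
      rfl
    have hkey : ∑ j, Φ (∑ i, X i j * a i)
        ≤ ∑ j, (βbar j * (∑ i, X i j * a i) + l1 * |βbar j|
            + l2 * (βbar j) ^ 2 + l0 * (if βbar j ≠ 0 then (1 : ℝ) else 0)) := by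
      refine Finset.sum_le_sum fun j _ => ?_
      rw [hΦ]
      exact fenchel_aux l0 l1 l2 hl0 hl1 hl2 (βbar j) _
    have hsplit : ∑ j, (βbar j * (∑ i, X i j * a i) + l1 * |βbar j|
            + l2 * (βbar j) ^ 2 + l0 * (if βbar j ≠ 0 then (1 : ℝ) else 0))
        = (∑ j, βbar j * ∑ i, X i j * a i) + l1 * (∑ j, |βbar j|)
          + l2 * (∑ j, (βbar j) ^ 2)
          + l0 * (∑ j, (if βbar j ≠ 0 then (1 : ℝ) else 0)) := by
      rw [Finset.sum_add_distrib, Finset.sum_add_distrib, Finset.sum_add_distrib,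
        Finset.mul_sum, Finset.mul_sum, Finset.mul_sum]
    have e2 : (1 / 2) * ∑ i, (y i - ∑ j, X i j * βbar j) ^ 2
        = (1 / 2) * (∑ i, (a i - αbar i) ^ 2) - (1 / 2) * (∑ i, (a i) ^ 2)
          - (∑ i, y i * a i) + ∑ j, βbar j * ∑ i, X i j * a i := by
      rw [← hswap]
      have hrow : ∀ i, (1 / 2) * (y i - ∑ j, X i j * βbar j) ^ 2
          = (1 / 2) * (a i - αbar i) ^ 2 - (1 / 2) * (a i) ^ 2
            - y i * a i + a i * ∑ j, X i j * βbar j := by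
        intro i
        rw [hαbar i]
        ring
      calc (1 / 2) * ∑ i, (y i - ∑ j, X i j * βbar j) ^ 2
          = ∑ i, ((1 / 2) * (a i - αbar i) ^ 2 - (1 / 2) * (a i) ^ 2
              - y i * a i + a i * ∑ j, X i j * βbar j) := by
            rw [Finset.mul_sum]
            exact Finset.sum_congr rfl fun i _ => hrow i
        _ = _ := by
            rw [Finset.sum_add_distrib, Finset.sum_sub_distrib,
              Finset.sum_sub_distrib, ← Finset.mul_sum, ← Finset.mul_sum]
    rw [hD a, hP βbar, hcard, e2]
    rw [hsplit] at hkey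
    linarith
  intro α β r hr j hj
  -- distance bound
  have hPD : (1 / 2) * ∑ i, (α i - αbar i) ^ 2 ≤ P β - D α := by
    have h1 := gap α
    have h2 := hmin β
    linarith
  have hnn : (0 : ℝ) ≤ ∑ i, (α i - αbar i) ^ 2 :=
    Finset.sum_nonneg fun i _ => sq_nonneg _
  have hr0 : 0 ≤ r := hr ▸ Real.sqrt_nonneg _
  have hr2 : ∑ i, (α i - αbar i) ^ 2 ≤ r ^ 2 := by
    rw [hr, Real.sq_sqrt (by linarith)]
    linarith
  have hdist : Real.sqrt (∑ i, (α i - αbar i) ^ 2) ≤ r := by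
    rw [← Real.sqrt_sq hr0]
    exact Real.sqrt_le_sqrt hr2
  -- Cauchy–Schwarz
  have hflip : ∑ i, (αbar i - α i) ^ 2 = ∑ i, (α i - αbar i) ^ 2 :=
    Finset.sum_congr rfl fun i _ => by ring
  have hCS : |∑ i, X i j * (αbar i - α i)|
      ≤ Real.sqrt (∑ i, (X i j) ^ 2) * r := by
    have h := Finset.sum_mul_sq_le_sq_mul_sq Finset.univ
      (fun i => X i j) (fun i => αbar i - α i)
    have h2 : |∑ i, X i j * (αbar i - α i)|
        ≤ Real.sqrt (∑ i, (X i j) ^ 2) * Real.sqrt (∑ i, (αbar i - α i) ^ 2) := by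
      rw [← Real.sqrt_sq_eq_abs, ← Real.sqrt_mul (by positivity)]
      exact Real.sqrt_le_sqrt h
    refine h2.trans ?_
    rw [hflip]
    exact mul_le_mul_of_nonneg_left hdist (Real.sqrt_nonneg _)
  -- lower bound on |x_j^T αbar|
  have hdecomp : ∑ i, X i j * αbar i
      = (∑ i, X i j * α i) + ∑ i, X i j * (αbar i - α i) := by
    rw [← Finset.sum_add_distrib]
    exact Finset.sum_congr rfl fun i _ => by ring
  have htri : |∑ i, X i j * α i|
      ≤ |∑ i, X i j * αbar i| + |∑ i, X i j * (αbar i - α i)| := by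
    have : (∑ i, X i j * α i)
        = (∑ i, X i j * αbar i) + -(∑ i, X i j * (αbar i - α i)) := by
      rw [hdecomp]; ring
    rw [this]
    exact (abs_add_le _ _).trans (by rw [abs_neg])
  have htbar : 2 * Real.sqrt (l0 * l2) + l1 < |∑ i, X i j * αbar i| := by
    have := hCS
    linarith
  -- |η αbar j|
  have hηval : |η αbar j| = |∑ i, X i j * αbar i| / (2 * l2) := by
    rw [hη, abs_div, abs_neg, abs_of_pos (by linarith : (0 : ℝ) < 2 * l2)]
  have hηgt : (2 * Real.sqrt (l0 * l2) + l1) / (2 * l2) < |η αbar j| := by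
    rw [hηval]
    exact (div_lt_div_iff_of_pos_right (by linarith)).mpr htbar
  -- conclude via link condition
  rcases hlink j with ⟨_, hle⟩ | ⟨heq, _⟩
  · linarith
  · have hl1lt : l1 / (2 * l2) < |η αbar j| := by
      have h1 : l1 / (2 * l2) < (2 * Real.sqrt (l0 * l2) + l1) / (2 * l2) :=
        (div_lt_div_iff_of_pos_right (by linarith)).mpr (by linarith)
      linarith
    have hpos : 0 < |η αbar j| := lt_of_le_of_lt (by positivity) hl1lt
    have hne : η αbar j ≠ 0 := abs_pos.mp hpos
    have hsgn : Real.sign (η αbar j) ≠ 0 := fun h => hne (Real.sign_eq_zero_iff.mp h)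
    rw [heq]
    exact mul_ne_zero hsgn (ne_of_gt (by linarith))
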